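/- arXiv:1906.05505 — 4 statements merged into one kernel-verified Lean document; each statement's English description precedes it below -/
import Mathlib

section
/- If a finite set S of points in the plane is contained in some closed disk of radius r, then there exists a point a ∈ S and a closed disk D of radius r whose boundary passes through a such that S ⊆ D. -/
abbrev Pt := EuclideanSpace ℝ (Fin 2)

/-- If a finite nonempty set `S` of points in the plane is contained in some closed disk of
radius `r`, then there is a point `a ∈ S` and a closed disk of radius `r` whose boundary
passes through `a` that contains `S`. -/
theorem stmt0 (S : Finset Pt) (r : ℝ) (hS : S.Nonempty)
    (hcov : ∃ c : Pt, ∀ p ∈ S, dist p c ≤ r) :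
    ∃ a ∈ S, ∃ c : Pt, dist a c = r ∧ ∀ p ∈ S, dist p c ≤ r := by
  obtain ⟨c, hc⟩ := hcov
  obtain ⟨a, haS, ha⟩ := S.exists_max_image (fun p => dist p c) hS
  set d := dist a c with hd
  have hd0 : 0 ≤ d := dist_nonneg
  have hdr : d ≤ r := hc a haS
  rcases eq_or_lt_of_le hd0 with h0 | h0
  · -- all points of S equal c
    have hac : a = c := dist_eq_zero.mp (hd.symm.trans h0.symm)
    refine ⟨a, haS, c + EuclideanSpace.single 0 r, ?_, ?_⟩
    · rw [hac, dist_eq_norm]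
      simp [abs_of_nonneg (hd0.trans hdr)]
    · intro p hp
      have hpc : p = c := dist_le_zero.mp ((ha p hp).trans h0.symm.le)
      rw [hpc, dist_eq_norm]
      simp [abs_of_nonneg (hd0.trans hdr)]
  · set t : ℝ := (r - d) / d with ht
    have ht0 : 0 ≤ t := div_nonneg (by linarith) h0.le
    refine ⟨a, haS, c + t • (c - a), ?_, ?_⟩
    · have key : a - (c + t • (c - a)) = (1 + t) • (a - c) := by
        module
      rw [dist_eq_norm, key, norm_smul, Real.norm_eq_abs,
        abs_of_nonneg (by linarith), ← dist_eq_norm, ← hd]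
      rw [ht, add_mul, div_mul_cancel₀ _ h0.ne']; ring
    · intro p hp
      have h1 : dist c (c + t • (c - a)) = t * d := by
        rw [dist_eq_norm]
        simp [norm_smul, abs_of_nonneg ht0, ← dist_eq_norm, dist_comm c a, hd]
      have h2 : t * d = r - d := by
        rw [ht]; field_simp
      calc dist p (c + t • (c - a)) ≤ dist p c + dist c (c + t • (c - a)) := dist_triangle _ _ _
        _ ≤ d + (r - d) := by rw [h1, h2]; linarith [ha p hp]
        _ = r := by ring
end

section
/- Let S be a nonempty finite set of points in ℝ² contained in a closed disk of radius r centered at O. Let a ∈ S be a point maximizing distance to O, and let r' = dist(a, O) ≤ r. If Q is the point on the ray from a through O with dist(a, Q) = r (i.e., Q = a + (r/r')·(O − a) when r' > 0), then every point b ∈ S satisfies dist(b, Q) ≤ r. -/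
/-- If `a ∈ S` maximizes distance to `O` among points of a set `S` covered by the disk of
radius `r` around `O`, with `r' = dist a O > 0`, and `Q = a + (r/r') • (O - a)`, then every
`b ∈ S` satisfies `dist b Q ≤ r`. -/
theorem stmt1 (S : Finset Pt) (O a Q : Pt) (r r' : ℝ)
    (hS : S.Nonempty) (ha : a ∈ S)
    (hr' : r' = dist a O)
    (hmax : ∀ b ∈ S, dist b O ≤ r')
    (hler : r' ≤ r) (hpos : 0 < r')
    (hQ : Q = a + (r / r') • (O - a)) :
    ∀ b ∈ S, dist b Q ≤ r := by
  intro b hb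
  have hne : r' ≠ 0 := ne_of_gt hpos
  have hOQ : dist O Q = r - r' := by
    have h1 : O - Q = (1 - r / r') • (O - a) := by
      rw [hQ]; module
    have h2 : ‖O - a‖ = r' := by
      rw [hr', dist_comm, dist_eq_norm]
    have h3 : 1 - r / r' ≤ 0 := by
      have : 1 ≤ r / r' := (one_le_div hpos).mpr hler
      linarith
    rw [dist_eq_norm, h1, norm_smul, h2, Real.norm_eq_abs, abs_of_nonpos h3]
    field_simp
    ring
  calc dist b Q ≤ dist b O + dist O Q := dist_triangle b O Q
    _ ≤ r' + (r - r') := by have := hmax b hb; linarith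
    _ = r := by ring
end

section
/- Let v be a point in ℝ², r > 0, and A a point with d_A = dist(v, A) satisfying 0 < d_A ≤ 2r. Using v as the pole of a polar coordinate system, let α_A be the angle of A. Then for any angle θ, the point A lies in the closed disk of radius r centered at C(θ) = v + r·(cos θ, sin θ) if and only if θ ∈ [α_A − arccos(d_A/(2r)), α_A + arccos(d_A/(2r))] (modulo 2π). -/
/-- Unit vector in direction `θ`. -/
noncomputable def dir (θ : ℝ) : Pt := (WithLp.equiv 2 (Fin 2 → ℝ)).symm ![Real.cos θ, Real.sin θ]

lemma cos_ge_iff (c : ℝ) (hc1 : -1 ≤ c) (hc2 : c ≤ 1) (x : ℝ) :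
    c ≤ Real.cos x ↔ ∃ k : ℤ, |x - 2 * Real.pi * k| ≤ Real.arccos c := by
  have hπ := Real.pi_pos
  constructor
  · intro h
    refine ⟨round (x / (2 * Real.pi)), ?_⟩
    set k := round (x / (2 * Real.pi)) with hk
    have h2π : (0:ℝ) < 2 * Real.pi := by linarith
    have hb : |x / (2 * Real.pi) - k| ≤ 1 / 2 := abs_sub_round _
    have heq : (x / (2 * Real.pi) - k) * (2 * Real.pi) = x - 2 * Real.pi * k := by
      field_simp
    have hbound : |x - 2 * Real.pi * k| ≤ Real.pi := by
      rw [← heq, abs_mul, abs_of_pos h2π]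
      nlinarith [abs_nonneg (x / (2 * Real.pi) - (k:ℝ))]
    have hc : x - 2 * Real.pi * k = x + ((-k : ℤ) : ℝ) * (2 * Real.pi) := by
      push_cast; ring
    have hcos : Real.cos |x - 2 * Real.pi * k| = Real.cos x := by
      rw [Real.cos_abs, hc, Real.cos_add_int_mul_two_pi]
    by_contra hcon
    push_neg at hcon
    have := Real.strictAntiOn_cos ⟨Real.arccos_nonneg c, Real.arccos_le_pi c⟩
      ⟨abs_nonneg _, hbound⟩ hcon
    rw [hcos, Real.cos_arccos hc1 hc2] at this
    linarith
  · rintro ⟨k, hk⟩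
    have h1 : Real.cos (Real.arccos c) ≤ Real.cos |x - 2 * Real.pi * k| :=
      Real.cos_le_cos_of_nonneg_of_le_pi (abs_nonneg _) (Real.arccos_le_pi c) hk
    have hc : x - 2 * Real.pi * k = x + ((-k : ℤ) : ℝ) * (2 * Real.pi) := by
      push_cast; ring
    rwa [Real.cos_arccos hc1 hc2, Real.cos_abs, hc, Real.cos_add_int_mul_two_pi] at h1

/-- Angular sweep containment: the point `A` (at distance `d_A` and polar angle `α_A` from `v`)
lies in the closed disk of radius `r` centered at `C(θ) = v + r • (cos θ, sin θ)` iff `θ` is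
within `arccos (d_A / (2r))` of `α_A` modulo `2π`. -/
theorem stmt2 (v A : Pt) (r d_A α_A : ℝ) (hr : 0 < r)
    (hdA : d_A = dist v A) (hpos : 0 < d_A) (hle : d_A ≤ 2 * r)
    (hα : A = v + d_A • dir α_A) :
    ∀ θ : ℝ, dist A (v + r • dir θ) ≤ r ↔
      ∃ k : ℤ, |θ - (α_A + 2 * Real.pi * k)| ≤ Real.arccos (d_A / (2 * r)) := by
  intro θ
  have hc0 : 0 ≤ d_A / (2 * r) := by positivity
  have hc1 : -(1:ℝ) ≤ d_A / (2 * r) := by linarith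
  have hc2 : d_A / (2 * r) ≤ 1 := by
    rw [div_le_one (by linarith)]; exact hle
  have hdist : dist A (v + r • dir θ) ^ 2
      = d_A ^ 2 + r ^ 2 - 2 * d_A * r * Real.cos (θ - α_A) := by
    rw [hα, EuclideanSpace.dist_eq]
    rw [Real.sq_sqrt (by positivity)]
    simp [dir, Fin.sum_univ_two, Real.dist_eq, WithLp.equiv_symm_apply, WithLp.ofLp_toLp, Real.cos_sub]
    nlinarith [Real.sin_sq_add_cos_sq α_A, Real.sin_sq_add_cos_sq θ]
  have key : dist A (v + r • dir θ) ≤ r ↔ d_A / (2 * r) ≤ Real.cos (θ - α_A) := by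
    rw [← Real.sqrt_sq dist_nonneg, Real.sqrt_le_left hr.le, hdist,
      div_le_iff₀ (by linarith : (0:ℝ) < 2 * r)]
    constructor <;> intro h <;> nlinarith
  rw [key, cos_ge_iff _ hc1 hc2]
  constructor <;> rintro ⟨k, hk⟩ <;> exact ⟨k, by convert hk using 2; ring⟩
end

section
/- If a finite set S of points in ℝ² has all pairwise Euclidean distances at most d, then S is contained in a closed disk of radius d/√3 (equivalently, diameter 2d/√3); in particular S is contained in a disk of diameter √2·d since 2/√3 ≤ √2. -/
open Finset RealInnerProductSpace

lemma jung_alg (t : Finset Pt) (c : Pt) (r d : ℝ) (hd : 0 ≤ d)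
    (hcard : t.card ≤ 3)
    (hdist : ∀ p ∈ t, dist p c = r)
    (hpairt : ∀ p ∈ t, ∀ q ∈ t, dist p q ≤ d)
    (w : Pt → ℝ) (hw0 : ∀ p ∈ t, 0 ≤ w p) (hw1 : ∑ p ∈ t, w p = 1)
    (hwc : ∑ p ∈ t, w p • p = c) : r ^ 2 ≤ d ^ 2 / 3 := by
  classical
  have hsum0 : ∑ p ∈ t, w p • (p - c) = 0 := by
    simp only [smul_sub, Finset.sum_sub_distrib, hwc, ← Finset.sum_smul, hw1, one_smul,
      sub_self]
  have key : ∀ q ∈ t, r ^ 2 ≤ (1 - w q) * (d ^ 2 / 2) := by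
    intro q hq
    have h0 : ∑ p ∈ t, w p * ⟪p - c, q - c⟫ = 0 := by
      have := congrArg (fun x : Pt => ⟪x, q - c⟫) hsum0
      simp only [sum_inner, real_inner_smul_left, inner_zero_left] at this
      exact this
    have hip : ∀ p ∈ t, r ^ 2 - d ^ 2 / 2 ≤ ⟪p - c, q - c⟫ := by
      intro p hp
      have h1 := norm_sub_sq_real (p - c) (q - c)
      rw [sub_sub_sub_cancel_right] at h1
      have hpc : ‖p - c‖ = r := by rw [← dist_eq_norm]; exact hdist p hp
      have hqc : ‖q - c‖ = r := by rw [← dist_eq_norm]; exact hdist q hq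
      have hpq : ‖p - q‖ ≤ d := by rw [← dist_eq_norm]; exact hpairt p hp q hq
      have hpq2 : ‖p - q‖ ^ 2 ≤ d ^ 2 := by nlinarith [norm_nonneg (p - q)]
      rw [hpc, hqc] at h1
      linarith
    have hqq : ⟪q - c, q - c⟫ = r ^ 2 := by
      rw [real_inner_self_eq_norm_sq, ← dist_eq_norm, hdist q hq]
    have hsplit : w q * ⟪q - c, q - c⟫ + ∑ p ∈ t.erase q, w p * ⟪p - c, q - c⟫ = 0 := by
      have := (Finset.add_sum_erase t (fun p => w p * ⟪p - c, q - c⟫) hq).trans h0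
      simpa using this
    have hsum_erase : ∑ p ∈ t.erase q, w p = 1 - w q := by
      rw [Finset.sum_erase_eq_sub hq, hw1]
    have hlow : (1 - w q) * (r ^ 2 - d ^ 2 / 2) ≤ ∑ p ∈ t.erase q, w p * ⟪p - c, q - c⟫ := by
      calc (1 - w q) * (r ^ 2 - d ^ 2 / 2)
          = ∑ p ∈ t.erase q, w p * (r ^ 2 - d ^ 2 / 2) := by
            rw [← Finset.sum_mul, hsum_erase]
        _ ≤ ∑ p ∈ t.erase q, w p * ⟪p - c, q - c⟫ :=
            Finset.sum_le_sum fun p hp =>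
              mul_le_mul_of_nonneg_left (hip p (Finset.mem_of_mem_erase hp))
                (hw0 p (Finset.mem_of_mem_erase hp))
    rw [hqq] at hsplit
    nlinarith [hw0 q hq]
  have hW2 : (1 : ℝ) / 3 ≤ ∑ q ∈ t, w q ^ 2 := by
    have h := sq_sum_le_card_mul_sum_sq (s := t) (f := w)
    rw [hw1] at h
    have hc : (t.card : ℝ) ≤ 3 := by exact_mod_cast hcard
    have hnn : 0 ≤ ∑ q ∈ t, w q ^ 2 := Finset.sum_nonneg fun q _ => sq_nonneg _
    nlinarith
  have hfinal : r ^ 2 * 1 ≤ (1 - ∑ q ∈ t, w q ^ 2) * (d ^ 2 / 2) := by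
    calc r ^ 2 * 1 = ∑ q ∈ t, w q * r ^ 2 := by rw [← Finset.sum_mul, hw1]; ring
      _ ≤ ∑ q ∈ t, (w q - w q ^ 2) * (d ^ 2 / 2) := by
          apply Finset.sum_le_sum
          intro q hq
          have := mul_le_mul_of_nonneg_left (key q hq) (hw0 q hq)
          nlinarith
      _ = (1 - ∑ q ∈ t, w q ^ 2) * (d ^ 2 / 2) := by
          rw [← Finset.sum_mul, Finset.sum_sub_distrib, hw1]
  nlinarith [sq_nonneg d]

lemma jung_center (S : Finset Pt) (hSne : S.Nonempty) (d : ℝ) (hd : 0 ≤ d)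
    (hpair : ∀ p ∈ S, ∀ q ∈ S, dist p q ≤ d) :
    ∃ c : Pt, ∀ p ∈ S, dist p c ≤ d / Real.sqrt 3 := by
  obtain ⟨p₀, hp₀⟩ := hSne
  have hSne : S.Nonempty := ⟨p₀, hp₀⟩
  set f : Pt → ℝ := fun c => S.sup' hSne (fun p => dist p c) with hf
  have hfcont : Continuous f :=
    Continuous.finset_sup'_apply hSne fun p _ => Continuous.dist continuous_const continuous_id
  have hfle : ∀ (y : Pt), ∀ p ∈ S, dist p y ≤ f y := fun y p hp => Finset.le_sup' (fun p => dist p y) hp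
  obtain ⟨c, hcball, hcmin⟩ :=
    (isCompact_closedBall p₀ (f p₀)).exists_isMinOn
      ⟨p₀, Metric.mem_closedBall_self (le_trans dist_nonneg (hfle p₀ p₀ hp₀))⟩
      hfcont.continuousOn
  have hmin : ∀ y : Pt, f c ≤ f y := by
    intro y
    by_cases hy : y ∈ Metric.closedBall p₀ (f p₀)
    · exact hcmin hy
    · have h1 : f p₀ < dist p₀ y := by
        rw [Metric.mem_closedBall, dist_comm] at hy
        linarith [not_le.mp hy]
      have h2 : dist p₀ y ≤ f y := hfle y p₀ hp₀
      have h3 : f c ≤ f p₀ := hcmin (Metric.mem_closedBall_self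
        (le_trans dist_nonneg (hfle p₀ p₀ hp₀)))
      linarith
  set r := f c with hr
  have hr0 : 0 ≤ r := le_trans dist_nonneg (hfle c p₀ hp₀)
  set T := S.filter (fun p => dist p c = r) with hT
  have hTne : T.Nonempty := by
    obtain ⟨p, hp, hpe⟩ := Finset.exists_mem_eq_sup' hSne (fun p => dist p c)
    exact ⟨p, Finset.mem_filter.mpr ⟨hp, hpe.symm⟩⟩
  have hTdist : ∀ p ∈ T, dist p c = r := fun p hp => (Finset.mem_filter.mp hp).2
  have hcK : c ∈ convexHull ℝ (↑T : Set Pt) := by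
    by_contra hcnot
    set K := convexHull ℝ (↑T : Set Pt) with hK
    have hKco : Convex ℝ K := convex_convexHull ℝ _
    obtain ⟨q0, hq0⟩ := hTne
    have hKne : K.Nonempty := ⟨q0, subset_convexHull ℝ _ (Finset.mem_coe.mpr hq0)⟩
    have hKcompact : IsCompact K := T.finite_toSet.isCompact_convexHull ℝ
    obtain ⟨v, hvK, hvmin⟩ :=
      exists_norm_eq_iInf_of_complete_convex hKne hKcompact.isComplete hKco c
    have hproj := (norm_eq_iInf_iff_real_inner_le_zero hKco hvK).mp hvmin
    set u := v - c with hu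
    have hune : u ≠ 0 := sub_ne_zero.mpr fun h => hcnot (h ▸ hvK)
    have hε : (0:ℝ) < ‖u‖ ^ 2 := by
      have := norm_pos_iff.mpr hune
      positivity
    have hip : ∀ p ∈ T, ‖u‖ ^ 2 ≤ ⟪p - c, u⟫ := by
      intro p hp
      have hpK : (p : Pt) ∈ K := subset_convexHull ℝ _ (Finset.mem_coe.mpr hp)
      have h1 : ⟪c - v, p - v⟫ ≤ 0 := hproj p hpK
      have h2 : ⟪p - c, u⟫ = ⟪p - v, u⟫ + ⟪u, u⟫ := by
        rw [← inner_add_left]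
        congr 1
        rw [hu]; abel
      have h3 : ⟪p - v, u⟫ = -⟪c - v, p - v⟫ := by
        rw [hu, real_inner_comm, ← neg_sub c v, inner_neg_left]
      have h4 : ⟪u, u⟫ = ‖u‖ ^ 2 := real_inner_self_eq_norm_sq u
      linarith [h2, h3, h4]
    set A := S.filter (fun p => dist p c < r) with hA
    have hST : ∀ p ∈ S, p ∈ T ∨ p ∈ A := by
      intro p hp
      rcases eq_or_lt_of_le (hfle c p hp) with h | h
      · exact Or.inl (Finset.mem_filter.mpr ⟨hp, h⟩)
      · exact Or.inr (Finset.mem_filter.mpr ⟨hp, h⟩)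
    set δ := if hA' : A.Nonempty then A.inf' hA' (fun p => r - dist p c) else 1 with hδdef
    have hδpos : 0 < δ := by
      rw [hδdef]
      split_ifs with hA'
      · rw [Finset.lt_inf'_iff]
        intro p hp
        have := (Finset.mem_filter.mp hp).2
        linarith
      · norm_num
    have hδle : ∀ p ∈ A, dist p c ≤ r - δ := by
      intro p hp
      rw [hδdef, dif_pos ⟨p, hp⟩]
      have := Finset.inf'_le (fun p => r - dist p c) hp
      linarith
    set ts := min 1 (δ / (2 * (‖u‖ + 1))) with htdef
    have ht0 : 0 < ts := lt_min one_pos (by positivity)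
    have ht1 : ts ≤ 1 := min_le_left _ _
    have htδ : ts * ‖u‖ < δ := by
      have h1 : ts ≤ δ / (2 * (‖u‖ + 1)) := min_le_right _ _
      have h2 : (0:ℝ) ≤ ‖u‖ := norm_nonneg u
      have h3 : ts * ‖u‖ ≤ δ / (2 * (‖u‖ + 1)) * ‖u‖ := mul_le_mul_of_nonneg_right h1 h2
      have h4 : δ / (2 * (‖u‖ + 1)) * ‖u‖ < δ := by
        rw [div_mul_eq_mul_div, div_lt_iff₀ (by positivity)]
        nlinarith
      linarith
    set c' := c + ts • u with hc'
    have hlt : ∀ p ∈ S, dist p c' < r := by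
      intro p hp
      rcases hST p hp with hpT | hpA
      · have hpc : dist p c = r := hTdist p hpT
        have hnorm : dist p c' ^ 2
            = r ^ 2 - 2 * ts * ⟪p - c, u⟫ + ts ^ 2 * ‖u‖ ^ 2 := by
          rw [dist_eq_norm]
          have hqe : p - c' = (p - c) - ts • u := by rw [hc']; abel
          rw [hqe, norm_sub_sq_real, real_inner_smul_right, norm_smul,
            ← dist_eq_norm, hpc, Real.norm_eq_abs, abs_of_pos ht0]
          ring
        have hiple := hip p hpT
        have h5 : ts ^ 2 * ‖u‖ ^ 2 ≤ ts * ‖u‖ ^ 2 := by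
          nlinarith [mul_nonneg (mul_nonneg ht0.le (sub_nonneg.mpr ht1)) (sq_nonneg ‖u‖)]
        have h6 : ts * ‖u‖ ^ 2 ≤ ts * ⟪p - c, u⟫ := mul_le_mul_of_nonneg_left hiple ht0.le
        have hsq : dist p c' ^ 2 < r ^ 2 := by nlinarith [mul_pos ht0 hε]
        exact lt_of_pow_lt_pow_left₀ 2 hr0 hsq
      · have h1 : dist p c' ≤ dist p c + dist c c' := dist_triangle p c c'
        have h2 : dist c c' = ts * ‖u‖ := by
          rw [hc', dist_self_add_right, norm_smul, Real.norm_eq_abs, abs_of_pos ht0]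
        have h3 := hδle p hpA
        linarith [htδ]
    have hflt : f c' < r := (Finset.sup'_lt_iff hSne).mpr fun p hp => hlt p hp
    linarith [hmin c']
  rw [convexHull_eq_union] at hcK
  simp only [Set.mem_iUnion, exists_prop] at hcK
  obtain ⟨t, hts, hai, hct⟩ := hcK
  have htcard : t.card ≤ 3 := by
    rcases t.eq_empty_or_nonempty with h | h
    · simp [h]
    · haveI := Finset.nonempty_coe_sort.mpr h
      have h1 := hai.finrank_vectorSpan_add_one
      have h2 : Module.finrank ℝ ↥(vectorSpan ℝ (Set.range ((↑) : ↥t → Pt))) ≤ 2 := by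
        have h3 := Submodule.finrank_le (vectorSpan ℝ (Set.range ((↑) : ↥t → Pt)))
        rwa [finrank_euclideanSpace_fin] at h3
      rw [Fintype.card_coe] at h1
      omega
  rw [Finset.convexHull_eq] at hct
  obtain ⟨w, hw0, hw1, hwc⟩ := hct
  rw [Finset.centerMass_eq_of_sum_1 _ _ hw1] at hwc
  have htT : ∀ p ∈ t, p ∈ T := fun p hp => Finset.mem_coe.mp (hts (Finset.mem_coe.mpr hp))
  have hr2 : r ^ 2 ≤ d ^ 2 / 3 :=
    jung_alg t c r d hd htcard
      (fun p hp => hTdist p (htT p hp))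
      (fun p hp q hq => hpair p (Finset.mem_filter.mp (htT p hp)).1 q
        (Finset.mem_filter.mp (htT q hq)).1)
      w hw0 hw1 (by simpa using hwc)
  refine ⟨c, fun p hp => ?_⟩
  have h1 : dist p c ≤ r := hfle c p hp
  have h2 : r ≤ d / Real.sqrt 3 := by
    have h3 : (d / Real.sqrt 3) ^ 2 = d ^ 2 / 3 := by
      rw [div_pow, Real.sq_sqrt (by norm_num : (0:ℝ) ≤ 3)]
    have h4 : r ^ 2 ≤ (d / Real.sqrt 3) ^ 2 := by rw [h3]; exact hr2
    have h5 : (0:ℝ) ≤ d / Real.sqrt 3 := by positivity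
    calc r = Real.sqrt (r ^ 2) := (Real.sqrt_sq hr0).symm
      _ ≤ Real.sqrt ((d / Real.sqrt 3) ^ 2) := Real.sqrt_le_sqrt h4
      _ = d / Real.sqrt 3 := Real.sqrt_sq h5
  linarith

/-- Jung's theorem in the plane: if a finite set `S` has all pairwise distances at most `d`,
then `S` is contained in a closed disk of radius `d / √3`; in particular it is contained in a
disk of diameter `√2 * d` (radius `√2 * d / 2`). -/
theorem stmt17 (S : Finset Pt) (d : ℝ)
    (hpair : ∀ p ∈ S, ∀ q ∈ S, dist p q ≤ d) :
    (∃ c : Pt, ∀ p ∈ S, dist p c ≤ d / Real.sqrt 3) ∧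
    (∃ c : Pt, ∀ p ∈ S, dist p c ≤ Real.sqrt 2 * d / 2) := by
  rcases S.eq_empty_or_nonempty with hS | hS
  · subst hS
    exact ⟨⟨0, by simp⟩, ⟨0, by simp⟩⟩
  · obtain ⟨p₀, hp₀⟩ := hS
    have hd : 0 ≤ d := le_trans dist_nonneg (hpair p₀ hp₀ p₀ hp₀)
    obtain ⟨c, hc⟩ := jung_center S ⟨p₀, hp₀⟩ d hd hpair
    refine ⟨⟨c, hc⟩, ⟨c, fun p hp => ?_⟩⟩
    have h2 : d / Real.sqrt 3 ≤ Real.sqrt 2 * d / 2 := by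
      have h3 : (0:ℝ) < Real.sqrt 3 := by positivity
      have h4 : Real.sqrt 2 * Real.sqrt 3 = Real.sqrt 6 := by
        rw [← Real.sqrt_mul (by norm_num : (0:ℝ) ≤ 2)]
        norm_num
      have h5 : (2:ℝ) ≤ Real.sqrt 6 := by
        nlinarith [Real.sq_sqrt (show (0:ℝ) ≤ 6 by norm_num), Real.sqrt_nonneg 6]
      rw [div_le_div_iff₀ h3 (by norm_num)]
      nlinarith [Real.sqrt_nonneg 2, Real.sqrt_nonneg 3]
    linarith [hc p hp]
end
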